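/- If a metric space (X,d) contains, for every positive integer n, an n-point subset whose points are pairwise equidistant (with some common positive distance possibly depending on n), then (X,d) admits no loose embedding into any finite-dimensional Euclidean space ℝ^N. -/

import Mathlib

open Finset in
theorem no_loose_embedding_of_arbitrarily_large_regular_simplices
    {X : Type*} [MetricSpace X]
    (hsimplex : ∀ n : ℕ, ∃ (p : Fin n → X) (c : ℝ), 0 < c ∧
      ∀ i j : Fin n, i ≠ j → dist (p i) (p j) = c) (N : ℕ) :
    ¬ ∃ f : X → EuclideanSpace ℝ (Fin N),
      ∀ x x' z z' : X, dist x x' = dist z z' ↔ dist (f x) (f x') = dist (f z) (f z') := by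
  rintro ⟨f, hf⟩
  obtain ⟨p, c, hc, hpc⟩ := hsimplex (N + 2)
  set q : Fin (N + 2) → EuclideanSpace ℝ (Fin N) := fun i => f (p i) with hq
  have h01 : (0 : Fin (N+2)) ≠ 1 := Fin.zero_ne_one
  set c' : ℝ := dist (q 0) (q 1) with hc'
  have hqc : ∀ i j : Fin (N+2), i ≠ j → dist (q i) (q j) = c' := by
    intro i j hij
    exact ((hf (p i) (p j) (p 0) (p 1)).mp (by rw [hpc i j hij, hpc 0 1 h01])).symm ▸ rfl
  have hc'0 : c' ≠ 0 := by
    intro h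
    have : dist (q 0) (q 1) = dist (q 0) (q 0) := by rw [← hc', h, dist_self]
    have := (hf (p 0) (p 1) (p 0) (p 0)).mpr this
    rw [hpc 0 1 h01, dist_self] at this
    exact hc.ne' this
  set v : Fin (N + 1) → EuclideanSpace ℝ (Fin N) := fun i => q i.succ - q 0 with hv
  have hnorm : ∀ i, ‖v i‖ = c' := fun i => by
    simpa [v, dist_eq_norm] using hqc i.succ 0 (Fin.succ_ne_zero i)
  have hsub : ∀ i j : Fin (N+1), i ≠ j → ‖v i - v j‖ = c' := by
    intro i j hij
    have : q i.succ - q 0 - (q j.succ - q 0) = q i.succ - q j.succ := by abel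
    rw [hv]
    simp only [this]
    simpa [dist_eq_norm] using hqc i.succ j.succ (fun h => hij (Fin.succ_injective _ h))
  have hinner : ∀ i j : Fin (N+1),
      inner ℝ (v i) (v j) = if i = j then c' ^ 2 else c' ^ 2 / 2 := by
    intro i j
    rcases eq_or_ne i j with rfl | hij
    · rw [if_pos rfl, real_inner_self_eq_norm_sq, hnorm i]
    · have h := norm_sub_sq_real (v i) (v j)
      rw [hsub i j hij, hnorm i, hnorm j] at h
      simp only [if_neg hij]
      linarith
  have hli : LinearIndependent ℝ v := by
    rw [Fintype.linearIndependent_iff]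
    intro a ha j
    have key : ∀ j : Fin (N+1),
        a j * c' ^ 2 / 2 + (∑ i, a i) * (c' ^ 2 / 2) = 0 := by
      intro j
      have h0 : (inner ℝ (v j) (∑ i, a i • v i) : ℝ) = 0 := by rw [ha, inner_zero_right]
      rw [inner_sum] at h0
      simp only [real_inner_smul_right, hinner] at h0
      have : ∑ i, a i * (if j = i then c' ^ 2 else c' ^ 2 / 2)
          = a j * (c' ^ 2 / 2) + ∑ i, a i * (c' ^ 2 / 2) := by
        have : ∀ i, a i * (if j = i then c' ^ 2 else c' ^ 2 / 2)
            = (if j = i then a i * (c' ^ 2 / 2) else 0) + a i * (c' ^ 2 / 2) := by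
          intro i; split <;> ring
        rw [Finset.sum_congr rfl fun i _ => this i, Finset.sum_add_distrib,
          Finset.sum_ite_eq (Finset.univ) j (fun i => a i * (c' ^ 2 / 2))]
        simp
      rw [this] at h0
      rw [Finset.sum_mul]
      linarith [h0]
    have hS : (∑ i, a i) = 0 := by
      have h2 : ∑ j : Fin (N+1), (a j * c' ^ 2 / 2 + (∑ i, a i) * (c' ^ 2 / 2)) = 0 := by
        rw [Finset.sum_congr rfl fun j _ => key j]; simp
      rw [Finset.sum_add_distrib, Finset.sum_const, Finset.card_univ, Fintype.card_fin] at h2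
      have h3 : (∑ j, a j * c' ^ 2 / 2) = (∑ j, a j) * (c' ^ 2 / 2) := by
        rw [Finset.sum_mul]; apply Finset.sum_congr rfl; intros; ring
      rw [h3, nsmul_eq_mul] at h2
      have hc2 : c' ^ 2 / 2 > 0 := by positivity
      push_cast at h2
      have hx : (∑ j, a j) * (c' ^ 2 / 2) * ((N : ℝ) + 2) = 0 := by
        linear_combination h2
      have hN : ((N : ℝ) + 2) ≠ 0 := by positivity
      rcases mul_eq_zero.mp hx with h | h
      · rcases mul_eq_zero.mp h with h | h
        · exact h
        · exact absurd h hc2.ne'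
      · exact absurd h hN
    have := key j
    rw [hS] at this
    have hc2 : c' ^ 2 > 0 := by positivity
    nlinarith
  have := hli.fintype_card_le_finrank
  rw [Fintype.card_fin, finrank_euclideanSpace_fin] at this
  omega
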